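/- Let (π_t)_{t=0}^{T} be a sequence of reals in (0,1] with π_0 ≥ 1/4. Suppose each step t is either a 'select' step with π_{t+1} ≥ n^{−2}·π_t (for a fixed integer n ≥ 2) or a 'deduct' step with π_{t+1} ≥ 2·π_t. Let w be the number of select steps and d the number of deduct steps among the first T steps. Then d ≤ 2 + (2·log₂ n)·w. -/
import Mathlib


theorem stmt_5 (n T : ℕ) (hn : 2 ≤ n) (π : ℕ → ℝ) (sel : ℕ → Bool)
    (hpos : ∀ t ≤ T, 0 < π t ∧ π t ≤ 1) (h0 : (1:ℝ)/4 ≤ π 0)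
    (hstep : ∀ t < T,
      (sel t = true ∧ π (t+1) ≥ ((n : ℝ))⁻¹ ^ 2 * π t) ∨
      (sel t = false ∧ π (t+1) ≥ 2 * π t)) :
    (((Finset.range T).filter (fun t => sel t = false)).card : ℝ) ≤
      2 + (2 * Real.logb 2 n) * (((Finset.range T).filter (fun t => sel t = true)).card : ℝ) := by
  have hn1 : (1:ℝ) ≤ n := by exact_mod_cast Nat.one_le_of_lt hn
  have hnpos : (0:ℝ) < n := by linarith
  have hlogn : 0 ≤ Real.logb 2 (n:ℝ) := Real.logb_nonneg one_lt_two hn1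
  set L : ℕ → ℝ := fun t => Real.logb 2 (π t) with hLdef
  have key : ∀ t, t ≤ T →
      (((Finset.range t).filter (fun s => sel s = false)).card : ℝ) ≤
        2 * Real.logb 2 (n:ℝ) * (((Finset.range t).filter (fun s => sel s = true)).card : ℝ)
          + L t - L 0 := by
    intro t
    induction t with
    | zero => intro _; simp
    | succ t ih =>
      intro ht
      have ht' : t ≤ T := Nat.le_of_succ_le ht
      have ih' := ih ht'
      have hpt := (hpos t ht').1
      have hpt1 := (hpos (t+1) ht).1
      have hcardf : ∀ b : Bool, ((Finset.range (t+1)).filter (fun s => sel s = b)).card =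
          ((Finset.range t).filter (fun s => sel s = b)).card + if sel t = b then 1 else 0 := by
        intro b
        rw [Finset.range_add_one, Finset.filter_insert]
        split <;> simp [Finset.card_insert_of_notMem]
      rcases hstep t (Nat.lt_of_succ_le ht) with ⟨hs, hge⟩ | ⟨hs, hge⟩
      · -- select step
        have hLstep : L t - 2 * Real.logb 2 (n:ℝ) ≤ L (t+1) := by
          have h1 : Real.logb 2 (((n:ℝ))⁻¹ ^ 2 * π t) ≤ L (t+1) :=
            Real.logb_le_logb_of_le one_lt_two (by positivity) hge
          have h2 : Real.logb 2 (((n:ℝ))⁻¹ ^ 2 * π t)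
              = -(2 * Real.logb 2 (n:ℝ)) + L t := by
            rw [Real.logb_mul (by positivity) (ne_of_gt hpt), Real.logb_pow, Real.logb_inv]
            ring
          linarith
        rw [hcardf true, hcardf false, if_pos hs, if_neg (show ¬ sel t = false by simp [hs])]
        push_cast
        linarith
      · -- deduct step
        have hLstep : L t + 1 ≤ L (t+1) := by
          have h1 : Real.logb 2 (2 * π t) ≤ L (t+1) :=
            Real.logb_le_logb_of_le one_lt_two (by positivity) hge
          have h2 : Real.logb 2 (2 * π t) = 1 + L t := by
            rw [Real.logb_mul two_ne_zero (ne_of_gt hpt), Real.logb_self_eq_one] <;> norm_num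
          linarith
        rw [hcardf true, hcardf false, if_pos hs, if_neg (show ¬ sel t = true by simp [hs])]
        push_cast
        linarith
  have hT := key T le_rfl
  have hLT : L T ≤ 0 := Real.logb_nonpos one_lt_two (le_of_lt (hpos T le_rfl).1) (hpos T le_rfl).2
  have hL0 : -2 ≤ L 0 := by
    have h14 : Real.logb 2 ((1:ℝ)/4) ≤ L 0 :=
      Real.logb_le_logb_of_le one_lt_two (by norm_num) h0
    have : Real.logb 2 ((1:ℝ)/4) = -2 := by
      rw [show ((1:ℝ)/4) = (2:ℝ)⁻¹ ^ 2 by norm_num, Real.logb_pow, Real.logb_inv,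
        Real.logb_self_eq_one] <;> norm_num
    linarith
  linarith
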